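/- Under Assumptions A and B, let {xᵗ} be generated by SCP_ls and for each t let λᵗ be a Lagrange multiplier of the t-th subproblem (so that λᵗ ∈ ℝ₊ᵐ satisfies the complementarity condition λᵗᵢ bar Gᵢ(x^{t+1}, xᵗ, L_gᵗ) = 0 and the first-order condition 0 ∈ ∇f(xᵗ) − ξᵗ + (L_fᵗ + ⟨λᵗ, L_gᵗ⟩)(x^{t+1} − xᵗ) + ∂P₁(x^{t+1}) + Σᵢ λᵗᵢ ∇gᵢ(xᵗ)). Then the sequence {λᵗ} is bounded, and every accumulation point of {xᵗ} is a stationary point of (P). -/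

import Mathlib

open Set Filter Topology Metric Bornology RealInnerProductSpace
open scoped Classical

noncomputable section

abbrev Euc (n : ℕ) : Type := EuclideanSpace ℝ (Fin n)

/-- Convex subdifferential of a real-valued function on an inner product space. -/
def ConvexSubdiff {H : Type*} [NormedAddCommGroup H] [InnerProductSpace ℝ H]
    (P : H → ℝ) (x : H) : Set H :=
  {ζ | ∀ y, ⟪ζ, y - x⟫ ≤ P y - P x}

/-- Regular (Fréchet) subdifferential of an extended-real-valued function. -/
def RegularSubdiff {H : Type*} [NormedAddCommGroup H] [InnerProductSpace ℝ H]
    (h : H → EReal) (x : H) : Set H :=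
  {ζ | h x ≠ ⊤ ∧ h x ≠ ⊥ ∧ ∀ ε : ℝ, 0 < ε →
    ∀ᶠ z in 𝓝 x,
      (((h x).toReal + ⟪ζ, z - x⟫ - ε * ‖z - x‖ : ℝ) : EReal) ≤ h z}

/-- Limiting (Mordukhovich) subdifferential. -/
def LimSubdiff {H : Type*} [NormedAddCommGroup H] [InnerProductSpace ℝ H]
    (h : H → EReal) (x : H) : Set H :=
  {ζ | ∃ xs ζs : ℕ → H, (∀ k, ζs k ∈ RegularSubdiff h (xs k)) ∧
    Tendsto xs atTop (𝓝 x) ∧ Tendsto (fun k => h (xs k)) atTop (𝓝 (h x)) ∧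
    Tendsto ζs atTop (𝓝 ζ)}

/-- The Kurdyka–Łojasiewicz property with exponent `α` at a point. -/
def KLExpAt {H : Type*} [NormedAddCommGroup H] [InnerProductSpace ℝ H]
    (h : H → EReal) (α : ℝ) (xhat : H) : Prop :=
  ∃ a₀ : ℝ, 0 < a₀ ∧ ∃ a : ℝ, 0 < a ∧ ∃ V ∈ 𝓝 xhat, ∀ x ∈ V,
    h xhat < h x → h x < h xhat + (a : EReal) →
    1 ≤ a₀ * (1 - α) * ((h x).toReal - (h xhat).toReal) ^ (-α) *
        infDist 0 (LimSubdiff h x)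

/-- The general Kurdyka–Łojasiewicz property at a point. -/
def KLAt {H : Type*} [NormedAddCommGroup H] [InnerProductSpace ℝ H]
    (h : H → EReal) (xhat : H) : Prop :=
  ∃ a : ℝ, 0 < a ∧ ∃ V ∈ 𝓝 xhat, ∃ φ φ' : ℝ → ℝ,
    φ 0 = 0 ∧ ContinuousOn φ (Ico 0 a) ∧ ConcaveOn ℝ (Ico 0 a) φ ∧
    (∀ s ∈ Ioo 0 a, HasDerivAt φ (φ' s) s ∧ 0 < φ' s) ∧
    ∀ x ∈ V, h xhat < h x → h x < h xhat + (a : EReal) →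
      1 ≤ φ' ((h x).toReal - (h xhat).toReal) * infDist 0 (LimSubdiff h x)

/-- The extended objective of problem (P). -/
def Fobj {n m : ℕ} (f P1 P2 : Euc n → ℝ) (g : Fin m → Euc n → ℝ) (x : Euc n) : EReal :=
  if ∀ i, g i x ≤ 0 then ((f x + P1 x - P2 x : ℝ) : EReal) else ⊤

/-- The moving balls constraint functions. -/
def barG {n m : ℕ} (g : Fin m → Euc n → ℝ) (g' : Fin m → Euc n → Euc n)
    (x y : Euc n) (w : EuclideanSpace ℝ (Fin m)) (i : Fin m) : ℝ :=
  g i y + ⟪g' i y, x - y⟫ + w i / 2 * ‖x - y‖ ^ 2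

/-- The space `ℝⁿ × ℝⁿ × ℝᵐ` with the (L²) Euclidean inner product. -/
abbrev PS (n m : ℕ) : Type :=
  WithLp 2 (Euc n × WithLp 2 (Euc n × EuclideanSpace ℝ (Fin m)))

/-- The potential function `bar F`. -/
def barF {n m : ℕ} (f P1 P2 : Euc n → ℝ) (g : Fin m → Euc n → ℝ)
    (g' : Fin m → Euc n → Euc n)
    (p : PS n m) : EReal :=
  if ∀ i, barG g g' p.ofLp.1 p.ofLp.2.ofLp.1 p.ofLp.2.ofLp.2 i ≤ 0 then
    ((f p.ofLp.1 + P1 p.ofLp.1 - P2 p.ofLp.1 : ℝ) : EReal) else ⊤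

/-- Stationary points of problem (P). -/
def IsStationaryPt {n m : ℕ} (f P1 P2 : Euc n → ℝ) (f' : Euc n → Euc n)
    (g : Fin m → Euc n → ℝ) (g' : Fin m → Euc n → Euc n) (x : Euc n) : Prop :=
  (∀ i, g i x ≤ 0) ∧ ∃ lam : Fin m → ℝ, (∀ i, 0 ≤ lam i) ∧
    (∀ i, lam i * g i x = 0) ∧
    ∃ u ∈ ConvexSubdiff P1 x, ∃ v ∈ ConvexSubdiff P2 x,
      f' x + u - v + ∑ i, lam i • g' i x = 0

/-- Assumptions A (smoothness, Lipschitz gradients, level-boundedness) and B (MFCQ). -/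
def AssumptionAB {n m : ℕ} (f P1 P2 : Euc n → ℝ) (f' : Euc n → Euc n)
    (g : Fin m → Euc n → ℝ) (g' : Fin m → Euc n → Euc n)
    (Lf : ℝ) (Lg : Fin m → ℝ) : Prop :=
  (∀ x, HasGradientAt f (f' x) x) ∧ LipschitzWith Lf.toNNReal f' ∧
  ConvexOn ℝ univ P1 ∧ Continuous P1 ∧ ConvexOn ℝ univ P2 ∧ Continuous P2 ∧
  (∀ i x, HasGradientAt (g i) (g' i x) x) ∧
  (∀ i, LipschitzWith (Lg i).toNNReal (g' i)) ∧
  {x : Euc n | ∀ i, g i x ≤ 0}.Nonempty ∧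
  (∀ σ : ℝ, IsBounded {x | Fobj f P1 P2 g x ≤ (σ : EReal)}) ∧
  (∀ x : Euc n, (∀ i, g i x ≤ 0) → ∃ d, ∀ i, g i x = 0 → ⟪g' i x, d⟫ < 0)

/-- The sequences generated by the SCP_ls algorithm. -/
structure SCPlsSeq {n m : ℕ} (f P1 P2 : Euc n → ℝ) (f' : Euc n → Euc n)
    (g : Fin m → Euc n → ℝ) (g' : Fin m → Euc n → Euc n)
    (c Llo : ℝ) (x ξ : ℕ → Euc n) (Lfs : ℕ → ℝ)
    (Lgs : ℕ → EuclideanSpace ℝ (Fin m)) : Prop where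
  feas0 : ∀ i, g i (x 0) ≤ 0
  subgrad : ∀ t, ξ t ∈ ConvexSubdiff P2 (x t)
  Lf_lb : ∀ t, Llo ≤ Lfs t
  Lg_lb : ∀ t i, Llo ≤ Lgs t i
  bdd : ∃ M : ℝ, ∀ t, Lfs t ≤ M ∧ ∀ i, Lgs t i ≤ M
  feas_sub : ∀ t i, barG g g' (x (t + 1)) (x t) (Lgs t) i ≤ 0
  min : ∀ t z, (∀ i, barG g g' z (x t) (Lgs t) i ≤ 0) →
    ⟪f' (x t) - ξ t, x (t + 1) - x t⟫ + Lfs t / 2 * ‖x (t + 1) - x t‖ ^ 2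
        + P1 (x (t + 1))
      ≤ ⟪f' (x t) - ξ t, z - x t⟫ + Lfs t / 2 * ‖z - x t‖ ^ 2 + P1 z
  uniq : ∀ t z, (∀ i, barG g g' z (x t) (Lgs t) i ≤ 0) →
    ⟪f' (x t) - ξ t, z - x t⟫ + Lfs t / 2 * ‖z - x t‖ ^ 2 + P1 z
      ≤ ⟪f' (x t) - ξ t, x (t + 1) - x t⟫ + Lfs t / 2 * ‖x (t + 1) - x t‖ ^ 2
        + P1 (x (t + 1)) → z = x (t + 1)
  feas : ∀ t i, g i (x (t + 1)) ≤ 0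
  descent : ∀ t, f (x (t + 1)) + P1 (x (t + 1)) - P2 (x (t + 1)) ≤
    f (x t) + P1 (x t) - P2 (x t) - c / 2 * ‖x (t + 1) - x t‖ ^ 2

/-- Cluster points of a sequence (limits of subsequences). -/
def seqClusterPts {X : Type*} [TopologicalSpace X] (u : ℕ → X) : Set X :=
  {p | ∃ φ : ℕ → ℕ, StrictMono φ ∧ Tendsto (u ∘ φ) atTop (𝓝 p)}

/-- the Lagrange multipliers of the SCP_ls subproblems are bounded, and
every accumulation point of the iterates is a stationary point of (P). -/
lemma subdiff_bound {n : ℕ} (P : Euc n → ℝ) (hP : Continuous P) (R : ℝ) :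
    ∃ C : ℝ, ∀ (z ζ : Euc n), ‖z‖ ≤ R → ζ ∈ ConvexSubdiff P z → ‖ζ‖ ≤ C := by
  obtain ⟨C, hC⟩ := (isCompact_closedBall (0 : Euc n) (|R| + 1)).exists_bound_of_continuousOn
    hP.continuousOn
  refine ⟨2 * C, fun z ζ hz hζ => ?_⟩
  have hzmem : z ∈ closedBall (0 : Euc n) (|R| + 1) := by
    rw [mem_closedBall, dist_zero_right]
    have : R ≤ |R| + 1 := le_trans (le_abs_self R) (by linarith)
    linarith [hz]
  have hC0 : (0:ℝ) ≤ C := le_trans (norm_nonneg _) (hC z hzmem)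
  rcases eq_or_ne ζ 0 with h0 | h0
  · simp [h0]; linarith
  · have hy : z + ‖ζ‖⁻¹ • ζ ∈ closedBall (0 : Euc n) (|R| + 1) := by
      rw [mem_closedBall, dist_zero_right]
      have h1 : ‖z + ‖ζ‖⁻¹ • ζ‖ ≤ ‖z‖ + ‖‖ζ‖⁻¹ • ζ‖ := norm_add_le _ _
      have h2 : ‖‖ζ‖⁻¹ • ζ‖ = 1 := by
        rw [norm_smul, Real.norm_eq_abs, abs_of_nonneg (inv_nonneg.2 (norm_nonneg ζ))]
        rw [inv_mul_cancel₀ (norm_ne_zero_iff.2 h0)]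
      have : R ≤ |R| := le_abs_self R
      rw [h2] at h1; linarith [hz]
    have h1 : ⟪ζ, (z + ‖ζ‖⁻¹ • ζ) - z⟫ = ‖ζ‖ := by
      rw [add_sub_cancel_left, real_inner_smul_right, real_inner_self_eq_norm_sq]
      rw [inv_mul_eq_div, sq, mul_div_assoc, div_self (norm_ne_zero_iff.2 h0), mul_one]
    have h2 := hζ (z + ‖ζ‖⁻¹ • ζ)
    rw [h1] at h2
    have h3 := hC _ hy
    have h4 := hC z hzmem
    rw [Real.norm_eq_abs] at h3 h4
    have := abs_le.1 h3
    have := abs_le.1 h4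
    linarith [abs_le.1 h3, abs_le.1 h4]

lemma subdiff_closed {n : ℕ} (P : Euc n → ℝ) (hP : Continuous P) {zs ζs : ℕ → Euc n}
    {z ζ : Euc n} (h : ∀ k, ζs k ∈ ConvexSubdiff P (zs k)) (hz : Tendsto zs atTop (𝓝 z))
    (hζ : Tendsto ζs atTop (𝓝 ζ)) : ζ ∈ ConvexSubdiff P z := by
  intro y
  have h1 : Tendsto (fun k => ⟪ζs k, y - zs k⟫) atTop (𝓝 ⟪ζ, y - z⟫) :=
    hζ.inner (tendsto_const_nhds.sub hz)
  have h2 : Tendsto (fun k => P y - P (zs k)) atTop (𝓝 (P y - P z)) :=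
    tendsto_const_nhds.sub ((hP.tendsto z).comp hz)
  exact le_of_tendsto_of_tendsto' h1 h2 fun k => h k y

theorem stmt5 {n m : ℕ} (f P1 P2 : Euc n → ℝ) (f' : Euc n → Euc n)
    (g : Fin m → Euc n → ℝ) (g' : Fin m → Euc n → Euc n)
    (Lf : ℝ) (Lg : Fin m → ℝ)
    (hAB : AssumptionAB f P1 P2 f' g g' Lf Lg)
    (c Llo : ℝ) (hc : 0 < c) (hLlo : 0 < Llo)
    (x ξ : ℕ → Euc n) (Lfs : ℕ → ℝ) (Lgs : ℕ → EuclideanSpace ℝ (Fin m))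
    (hseq : SCPlsSeq f P1 P2 f' g g' c Llo x ξ Lfs Lgs)
    (lam : ℕ → Fin m → ℝ)
    (hlam_nonneg : ∀ t i, 0 ≤ lam t i)
    (hcompl : ∀ t i, lam t i * barG g g' (x (t + 1)) (x t) (Lgs t) i = 0)
    (hfoc : ∀ t, ∃ u ∈ ConvexSubdiff P1 (x (t + 1)),
      f' (x t) - ξ t + (Lfs t + ∑ i, lam t i * Lgs t i) • (x (t + 1) - x t) + u
        + ∑ i, lam t i • g' i (x t) = 0) :
    (∃ M : ℝ, ∀ t i, lam t i ≤ M) ∧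
    ∀ xstar : Euc n, xstar ∈ seqClusterPts x →
      IsStationaryPt f P1 P2 f' g g' xstar := by
  obtain ⟨hf, hf'lip, hP1cvx, hP1c, hP2cvx, hP2c, hg, hg'lip, -, hlevel, hMFCQ⟩ := hAB
  have hfc : Continuous f := continuous_iff_continuousAt.2 fun z => (hf z).continuousAt
  have hgc : ∀ i, Continuous (g i) := fun i =>
    continuous_iff_continuousAt.2 fun z => (hg i z).continuousAt
  have hf'c : Continuous f' := hf'lip.continuous
  have hg'c : ∀ i, Continuous (g' i) := fun i => (hg'lip i).continuous
  have hfeas : ∀ t i, g i (x t) ≤ 0 := by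
    intro t
    cases t with
    | zero => exact hseq.feas0
    | succ t => exact hseq.feas t
  set aF : ℕ → ℝ := fun t => f (x t) + P1 (x t) - P2 (x t) with haFdef
  have haF_anti : Antitone aF := antitone_nat_of_succ_le fun t => by
    have h1 := hseq.descent t
    have h2 : 0 ≤ c / 2 * ‖x (t + 1) - x t‖ ^ 2 := by positivity
    simp only [aF]; linarith
  obtain ⟨R, hR⟩ : ∃ R, ∀ t, ‖x t‖ ≤ R := by
    obtain ⟨R, hR⟩ := isBounded_iff_forall_norm_le.1 (hlevel (aF 0))
    refine ⟨R, fun t => hR _ ?_⟩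
    simp only [Set.mem_setOf_eq, Fobj, if_pos (hfeas t)]
    exact EReal.coe_le_coe_iff.2 (haF_anti (Nat.zero_le t))
  have hR0 : (0:ℝ) ≤ R := le_trans (norm_nonneg _) (hR 0)
  obtain ⟨Cphi, hCphi⟩ := (isCompact_closedBall (0 : Euc n) R).exists_bound_of_continuousOn
    ((hfc.add hP1c).sub hP2c).continuousOn
  have haF_bdd : ∀ t, -Cphi ≤ aF t := fun t => by
    have h1 := hCphi (x t) (by rw [mem_closedBall, dist_zero_right]; exact hR t)
    rw [Real.norm_eq_abs] at h1
    exact (abs_le.1 h1).1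
  have haF_conv : Tendsto aF atTop (𝓝 (⨅ t, aF t)) :=
    tendsto_atTop_ciInf haF_anti ⟨-Cphi, by rintro v ⟨t, rfl⟩; exact haF_bdd t⟩
  have hΔsq : Tendsto (fun t => ‖x (t + 1) - x t‖ ^ 2) atTop (𝓝 0) := by
    have hub : Tendsto (fun t => 2 / c * (aF t - aF (t + 1))) atTop (𝓝 0) := by
      have := (haF_conv.sub (haF_conv.comp (tendsto_add_atTop_nat 1))).const_mul (2 / c)
      simpa using this
    refine squeeze_zero (fun t => sq_nonneg _) (fun t => ?_) hub
    have h1 : c / 2 * ‖x (t + 1) - x t‖ ^ 2 ≤ aF t - aF (t + 1) := by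
      have := hseq.descent t; simp only [aF]; linarith
    calc ‖x (t + 1) - x t‖ ^ 2 = 2 / c * (c / 2 * ‖x (t + 1) - x t‖ ^ 2) := by
          field_simp
      _ ≤ 2 / c * (aF t - aF (t + 1)) :=
          mul_le_mul_of_nonneg_left h1 (by positivity)
  have hΔn : Tendsto (fun t => ‖x (t + 1) - x t‖) atTop (𝓝 0) := by
    have h2 : Tendsto (fun t => Real.sqrt (‖x (t + 1) - x t‖ ^ 2)) atTop
        (𝓝 (Real.sqrt 0)) := (Real.continuous_sqrt.tendsto 0).comp hΔsq
    rw [Real.sqrt_zero] at h2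
    rwa [funext (fun t => Real.sqrt_sq (norm_nonneg (x (t + 1) - x t)))] at h2
  have hΔ : Tendsto (fun t => x (t + 1) - x t) atTop (𝓝 0) :=
    tendsto_zero_iff_norm_tendsto_zero.2 hΔn
  obtain ⟨M, hM⟩ := hseq.bdd
  have hM0 : (0:ℝ) < M := lt_of_lt_of_le hLlo (le_trans (hseq.Lf_lb 0) (hM 0).1)
  obtain ⟨Cf', hCf'⟩ := (isCompact_closedBall (0 : Euc n) R).exists_bound_of_continuousOn
    hf'c.continuousOn
  have hf'bd : ∀ t, ‖f' (x t)‖ ≤ Cf' := fun t =>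
    hCf' _ (by rw [mem_closedBall, dist_zero_right]; exact hR t)
  obtain ⟨Cxi, hCxi⟩ := subdiff_bound P2 hP2c R
  have hxibd : ∀ t, ‖ξ t‖ ≤ Cxi := fun t => hCxi _ _ (hR t) (hseq.subgrad t)
  choose u hu hufoc using hfoc
  obtain ⟨Cu, hCu⟩ := subdiff_bound P1 hP1c R
  have hubd : ∀ t, ‖u t‖ ≤ Cu := fun t => hCu _ _ (hR (t + 1)) (hu t)
  have hxi0 : (0:ℝ) ≤ Cxi := le_trans (norm_nonneg _) (hxibd 0)
  have hu0 : (0:ℝ) ≤ Cu := le_trans (norm_nonneg _) (hubd 0)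
  -- limits of barG along subsequences
  have hbarGlim : ∀ (θ : ℕ → ℕ) (xb : Euc n), Tendsto θ atTop atTop →
      Tendsto (fun k => x (θ k)) atTop (𝓝 xb) → ∀ i,
      Tendsto (fun k => barG g g' (x (θ k + 1)) (x (θ k)) (Lgs (θ k)) i)
        atTop (𝓝 (g i xb)) := by
    intro θ xb hθ hxθ i
    have hΔθ : Tendsto (fun k => x (θ k + 1) - x (θ k)) atTop (𝓝 0) := hΔ.comp hθ
    have t1 : Tendsto (fun k => g i (x (θ k))) atTop (𝓝 (g i xb)) :=
      ((hgc i).tendsto xb).comp hxθ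
    have t2 : Tendsto (fun k => ⟪g' i (x (θ k)), x (θ k + 1) - x (θ k)⟫) atTop (𝓝 0) := by
      have := Tendsto.inner (𝕜 := ℝ) (((hg'c i).tendsto xb).comp hxθ) hΔθ
      simpa using this
    have t3 : Tendsto (fun k => Lgs (θ k) i / 2 * ‖x (θ k + 1) - x (θ k)‖ ^ 2)
        atTop (𝓝 0) := by
      refine squeeze_zero (g := fun k => M / 2 * ‖x (θ k + 1) - x (θ k)‖ ^ 2)
        (fun k => ?_) (fun k => ?_) ?_
      · exact mul_nonneg (div_nonneg (le_trans hLlo.le (hseq.Lg_lb _ i)) (by norm_num))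
          (sq_nonneg _)
      · exact mul_le_mul_of_nonneg_right
          (by linarith [(hM (θ k)).2 i] : Lgs (θ k) i / 2 ≤ M / 2) (sq_nonneg _)
      · have := (hΔsq.comp hθ).const_mul (M / 2)
        simpa using this
    have := (t1.add t2).add t3
    simpa [barG] using this
  -- Part 1: boundedness of multipliers
  have hlam_bdd : ∃ Mlam : ℝ, ∀ t i, lam t i ≤ Mlam := by
    set s : ℕ → ℝ := fun t => ∑ i, lam t i with hsdef
    have hlam_le_s : ∀ t i, lam t i ≤ s t := fun t i =>
      Finset.single_le_sum (fun j _ => hlam_nonneg t j) (Finset.mem_univ i)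
    by_contra hcon
    push_neg at hcon
    have hs_unbdd : ∀ M₀ : ℝ, ∃ t, M₀ < s t := fun M₀ => by
      obtain ⟨t, i, h⟩ := hcon M₀
      exact ⟨t, lt_of_lt_of_le h (hlam_le_s t i)⟩
    have hex : ∀ k : ℕ, ∃ t, (k : ℝ) < s t ∧ k < t := by
      intro k
      obtain ⟨t, ht⟩ := hs_unbdd
        (max ((k : ℝ)) ((Finset.range (k + 1)).sup' Finset.nonempty_range_add_one s))
      refine ⟨t, lt_of_le_of_lt (le_max_left _ _) ht, ?_⟩
      by_contra hle
      push_neg at hle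
      exact absurd ht (not_lt.2 (le_max_of_le_right
        (Finset.le_sup' s (Finset.mem_range.2 (Nat.lt_succ_of_le hle)))))
    choose τ hτ1 hτ2 using hex
    have hτtop : Tendsto τ atTop atTop :=
      tendsto_atTop_mono (fun k => (hτ2 k).le) tendsto_id
    have hs_pos : ∀ k, 0 < s (τ k) := fun k => lt_of_le_of_lt (Nat.cast_nonneg k) (hτ1 k)
    obtain ⟨xb, -, ψ1, hψ1, hxψ1⟩ := tendsto_subseq_of_bounded
      (isBounded_closedBall (x := (0 : Euc n)) (r := R))
      (x := fun k => x (τ k))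
      (fun k => by rw [mem_closedBall, dist_zero_right]; exact hR (τ k))
    set μ : ℕ → (Fin m → ℝ) := fun k i => lam (τ k) i / s (τ k) with hμdef
    have hμ_nonneg : ∀ k i, 0 ≤ μ k i := fun k i =>
      div_nonneg (hlam_nonneg _ i) (hs_pos k).le
    have hμ_le : ∀ k i, μ k i ≤ 1 := fun k i => by
      rw [div_le_one (hs_pos k)]; exact hlam_le_s _ i
    obtain ⟨μb, -, ψ2, hψ2, hμψ2⟩ := tendsto_subseq_of_bounded
      (isBounded_closedBall (x := (0 : Fin m → ℝ)) (r := 1))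
      (x := fun j => μ (ψ1 j))
      (fun j => by
        rw [mem_closedBall, dist_zero_right]
        refine (pi_norm_le_iff_of_nonneg zero_le_one).2 fun i => ?_
        rw [Real.norm_eq_abs, abs_of_nonneg (hμ_nonneg _ i)]
        exact hμ_le _ i)
    set ρ : ℕ → ℕ := fun l => τ (ψ1 (ψ2 l)) with hρdef
    have hρtop : Tendsto ρ atTop atTop := hτtop.comp (hψ1.comp hψ2).tendsto_atTop
    have hxρ : Tendsto (fun l => x (ρ l)) atTop (𝓝 xb) := hxψ1.comp hψ2.tendsto_atTop
    have hμi : ∀ i, Tendsto (fun l => μ (ψ1 (ψ2 l)) i) atTop (𝓝 (μb i)) := fun i =>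
      tendsto_pi_nhds.1 (hμψ2 : Tendsto (fun l => μ (ψ1 (ψ2 l))) atTop (𝓝 μb)) i
    have hsρ : Tendsto (fun l => s (ρ l)) atTop atTop := by
      refine tendsto_atTop_mono (fun l => (hτ1 (ψ1 (ψ2 l))).le) ?_
      exact tendsto_natCast_atTop_atTop.comp (hψ1.comp hψ2).tendsto_atTop
    have hsinv : Tendsto (fun l => (s (ρ l))⁻¹) atTop (𝓝 0) := hsρ.inv_tendsto_atTop
    have hS : ∀ t, (∑ i, lam t i • g' i (x t)) =
        -(f' (x t) - ξ t + (Lfs t + ∑ i, lam t i * Lgs t i) • (x (t + 1) - x t) + u t) :=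
      fun t => eq_neg_of_add_eq_zero_right (hufoc t)
    have hw_eq : ∀ l, (∑ i, μ (ψ1 (ψ2 l)) i • g' i (x (ρ l)))
        = (s (ρ l))⁻¹ • (∑ i, lam (ρ l) i • g' i (x (ρ l))) := by
      intro l
      rw [Finset.smul_sum]
      refine Finset.sum_congr rfl fun i _ => ?_
      rw [smul_smul]
      congr 1
      simp only [μ, ρ]
      rw [div_eq_inv_mul]
    have hcoef_le : ∀ t, Lfs t + ∑ i, lam t i * Lgs t i ≤ M + s t * M := by
      intro t
      have h1 : ∑ i, lam t i * Lgs t i ≤ s t * M := by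
        calc ∑ i, lam t i * Lgs t i ≤ ∑ i, lam t i * M :=
              Finset.sum_le_sum fun i _ =>
                mul_le_mul_of_nonneg_left ((hM t).2 i) (hlam_nonneg t i)
          _ = s t * M := by rw [← Finset.sum_mul]
      linarith [(hM t).1]
    have hcoef_nonneg : ∀ t, 0 ≤ Lfs t + ∑ i, lam t i * Lgs t i := fun t =>
      add_nonneg (le_trans hLlo.le (hseq.Lf_lb t))
        (Finset.sum_nonneg fun i _ => mul_nonneg (hlam_nonneg t i)
          (le_trans hLlo.le (hseq.Lg_lb t i)))
    have hw0 : Tendsto (fun l => ∑ i, μ (ψ1 (ψ2 l)) i • g' i (x (ρ l))) atTop (𝓝 0) := by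
      rw [tendsto_zero_iff_norm_tendsto_zero]
      refine squeeze_zero (fun l => norm_nonneg _) (fun l => ?_)
        (g := fun l => (s (ρ l))⁻¹ * (Cf' + Cxi + Cu) + (s (ρ l))⁻¹ * M
          * ‖x (ρ l + 1) - x (ρ l)‖ + M * ‖x (ρ l + 1) - x (ρ l)‖) ?_
      · set t := ρ l with htdef
        rw [hw_eq l, hS t, norm_smul, norm_neg, Real.norm_eq_abs,
          abs_of_nonneg (inv_nonneg.2 (hs_pos _).le)]
        have hd0 : (0:ℝ) ≤ ‖x (t + 1) - x t‖ := norm_nonneg _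
        have hn : ‖f' (x t) - ξ t + (Lfs t + ∑ i, lam t i * Lgs t i) • (x (t + 1) - x t)
            + u t‖ ≤ (Cf' + Cxi + Cu) + (M + s t * M) * ‖x (t + 1) - x t‖ := by
          calc ‖f' (x t) - ξ t + (Lfs t + ∑ i, lam t i * Lgs t i) • (x (t + 1) - x t) + u t‖
              ≤ ‖f' (x t) - ξ t + (Lfs t + ∑ i, lam t i * Lgs t i) • (x (t + 1) - x t)‖
                + ‖u t‖ := norm_add_le _ _
            _ ≤ (‖f' (x t) - ξ t‖
                + ‖(Lfs t + ∑ i, lam t i * Lgs t i) • (x (t + 1) - x t)‖) + ‖u t‖ := by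
                gcongr; exact norm_add_le _ _
            _ ≤ ((Cf' + Cxi) + (M + s t * M) * ‖x (t + 1) - x t‖) + Cu := by
                gcongr ?_ + ?_ + ?_
                · exact le_trans (norm_sub_le _ _) (add_le_add (hf'bd t) (hxibd t))
                · rw [norm_smul, Real.norm_eq_abs, abs_of_nonneg (hcoef_nonneg t)]
                  exact mul_le_mul_of_nonneg_right (hcoef_le t) hd0
                · exact hubd t
            _ = (Cf' + Cxi + Cu) + (M + s t * M) * ‖x (t + 1) - x t‖ := by ring
        have hσ : (0:ℝ) ≤ (s t)⁻¹ := inv_nonneg.2 (hs_pos _).le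
        have hσs : (s t)⁻¹ * s t = 1 := inv_mul_cancel₀ (hs_pos _).ne'
        calc (s t)⁻¹ * ‖f' (x t) - ξ t
              + (Lfs t + ∑ i, lam t i * Lgs t i) • (x (t + 1) - x t) + u t‖
            ≤ (s t)⁻¹ * ((Cf' + Cxi + Cu) + (M + s t * M) * ‖x (t + 1) - x t‖) :=
              mul_le_mul_of_nonneg_left hn hσ
          _ = (s t)⁻¹ * (Cf' + Cxi + Cu) + (s t)⁻¹ * M * ‖x (t + 1) - x t‖
              + ((s t)⁻¹ * s t) * (M * ‖x (t + 1) - x t‖) := by ring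
          _ = (s t)⁻¹ * (Cf' + Cxi + Cu) + (s t)⁻¹ * M * ‖x (t + 1) - x t‖
              + M * ‖x (t + 1) - x t‖ := by rw [hσs, one_mul]
      · have hΔρ : Tendsto (fun l => ‖x (ρ l + 1) - x (ρ l)‖) atTop (𝓝 0) := hΔn.comp hρtop
        have := ((hsinv.mul_const (Cf' + Cxi + Cu)).add
          ((hsinv.mul_const M).mul hΔρ)).add (hΔρ.const_mul M)
        simpa using this
    have hwlim : Tendsto (fun l => ∑ i, μ (ψ1 (ψ2 l)) i • g' i (x (ρ l))) atTop
        (𝓝 (∑ i, μb i • g' i xb)) :=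
      tendsto_finset_sum _ fun i _ => (hμi i).smul (((hg'c i).tendsto xb).comp hxρ)
    have heq0 : (∑ i, μb i • g' i xb) = 0 := tendsto_nhds_unique hwlim hw0
    have hμbg : ∀ i, μb i * g i xb = 0 := by
      intro i
      have h1 : Tendsto (fun l => μ (ψ1 (ψ2 l)) i
          * barG g g' (x (ρ l + 1)) (x (ρ l)) (Lgs (ρ l)) i) atTop (𝓝 (μb i * g i xb)) :=
        (hμi i).mul (hbarGlim ρ xb hρtop hxρ i)
      have h2 : ∀ l, μ (ψ1 (ψ2 l)) i * barG g g' (x (ρ l + 1)) (x (ρ l)) (Lgs (ρ l)) i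
          = 0 := by
        intro l
        simp only [μ, ρ]
        rw [div_mul_eq_mul_div, hcompl, zero_div]
      rw [funext h2] at h1
      exact tendsto_nhds_unique h1 tendsto_const_nhds
    have hμb_sum : (∑ i, μb i) = 1 := by
      have h1 : Tendsto (fun l => ∑ i, μ (ψ1 (ψ2 l)) i) atTop (𝓝 (∑ i, μb i)) :=
        tendsto_finset_sum _ fun i _ => hμi i
      have h2 : ∀ l, (∑ i, μ (ψ1 (ψ2 l)) i) = 1 := by
        intro l
        simp only [μ]
        rw [← Finset.sum_div, div_self (hs_pos _).ne']
      rw [funext h2] at h1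
      exact tendsto_nhds_unique h1 tendsto_const_nhds
    have hμb_nonneg : ∀ i, 0 ≤ μb i := fun i =>
      ge_of_tendsto (hμi i) (Eventually.of_forall fun l => hμ_nonneg _ i)
    have hxb_feas : ∀ i, g i xb ≤ 0 := fun i =>
      le_of_tendsto (((hgc i).tendsto xb).comp hxρ)
        (Eventually.of_forall fun l => hfeas (ρ l) i)
    obtain ⟨d, hd⟩ := hMFCQ xb hxb_feas
    have hsum0 : (∑ i, μb i * ⟪g' i xb, d⟫) = 0 := by
      have := congrArg (fun v : Euc n => ⟪v, d⟫) heq0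
      simpa [sum_inner, real_inner_smul_left, Finset.mul_sum, mul_assoc] using this
    have hterm_nonpos : ∀ i ∈ Finset.univ, μb i * ⟪g' i xb, d⟫ ≤ (0:ℝ) := by
      intro i _
      rcases eq_or_lt_of_le (hμb_nonneg i) with h | h
    -- h : 0 = μb i or 0 < μb i
      · rw [← h, zero_mul]
      · have hg0 : g i xb = 0 := by
          rcases mul_eq_zero.1 (hμbg i) with h' | h'
          · exact absurd h' h.ne'
          · exact h'
        exact mul_nonpos_of_nonneg_of_nonpos (hμb_nonneg i) (hd i hg0).le
    obtain ⟨i0, -, hi0⟩ := Finset.exists_ne_zero_of_sum_ne_zero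
      (hμb_sum ▸ one_ne_zero : (∑ i, μb i) ≠ 0)
    have hi0pos : 0 < μb i0 := lt_of_le_of_ne (hμb_nonneg i0) (Ne.symm hi0)
    have hgi0 : g i0 xb = 0 := by
      rcases mul_eq_zero.1 (hμbg i0) with h' | h'
      · exact absurd h' hi0
      · exact h'
    have hzero := (Finset.sum_eq_zero_iff_of_nonpos hterm_nonpos).1 hsum0 i0
      (Finset.mem_univ i0)
    have hneg : μb i0 * ⟪g' i0 xb, d⟫ < 0 :=
      mul_neg_of_pos_of_neg hi0pos (hd i0 hgi0)
    exact absurd hzero hneg.ne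
  -- Part 2: cluster points are stationary
  obtain ⟨Mlam, hMlam⟩ := hlam_bdd
  refine ⟨⟨Mlam, fun t i => hMlam t i⟩, ?_⟩
  rintro xstar ⟨φ, hφ, hφlim⟩
  obtain ⟨lamb, -, ψa, hψa, hlba⟩ := tendsto_subseq_of_bounded
    (isBounded_closedBall (x := (0 : Fin m → ℝ)) (r := max Mlam 0))
    (x := fun k => lam (φ k))
    (fun k => by
      rw [mem_closedBall, dist_zero_right]
      refine (pi_norm_le_iff_of_nonneg (le_max_right _ _)).2 fun i => ?_
      rw [Real.norm_eq_abs, abs_of_nonneg (hlam_nonneg _ i)]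
      exact le_max_of_le_left (hMlam _ i))
  obtain ⟨vb, -, ψb, hψb, hvb⟩ := tendsto_subseq_of_bounded
    (isBounded_closedBall (x := (0 : Euc n)) (r := Cxi))
    (x := fun j => ξ (φ (ψa j)))
    (fun j => by rw [mem_closedBall, dist_zero_right]; exact hxibd _)
  obtain ⟨ub, -, ψc, hψc, hub⟩ := tendsto_subseq_of_bounded
    (isBounded_closedBall (x := (0 : Euc n)) (r := Cu))
    (x := fun j => u (φ (ψa (ψb j))))
    (fun j => by rw [mem_closedBall, dist_zero_right]; exact hubd _)
  set θ : ℕ → ℕ := fun r => φ (ψa (ψb (ψc r))) with hθdef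
  have hθtop : Tendsto θ atTop atTop :=
    (hφ.comp (hψa.comp (hψb.comp hψc))).tendsto_atTop
  have hxθ : Tendsto (fun r => x (θ r)) atTop (𝓝 xstar) :=
    hφlim.comp ((hψa.comp (hψb.comp hψc)).tendsto_atTop)
  have hlbθ : Tendsto (fun r => lam (θ r)) atTop (𝓝 lamb) :=
    hlba.comp (hψb.comp hψc).tendsto_atTop
  have hvθ : Tendsto (fun r => ξ (θ r)) atTop (𝓝 vb) := hvb.comp hψc.tendsto_atTop
  have huθ : Tendsto (fun r => u (θ r)) atTop (𝓝 ub) := hub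
  have hlbi : ∀ i, Tendsto (fun r => lam (θ r) i) atTop (𝓝 (lamb i)) := fun i =>
    tendsto_pi_nhds.1 hlbθ i
  have hxθ1 : Tendsto (fun r => x (θ r + 1)) atTop (𝓝 xstar) := by
    have h1 : Tendsto (fun r => x (θ r) + (x (θ r + 1) - x (θ r))) atTop
        (𝓝 (xstar + 0)) := hxθ.add (hΔ.comp hθtop)
    have h2 : (fun r => x (θ r) + (x (θ r + 1) - x (θ r))) = fun r => x (θ r + 1) :=
      funext fun r => by abel
    rw [h2] at h1
    simpa using h1
  have hfeas_star : ∀ i, g i xstar ≤ 0 := fun i =>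
    le_of_tendsto (((hgc i).tendsto xstar).comp hxθ)
      (Eventually.of_forall fun r => hfeas (θ r) i)
  have hlamb_nonneg : ∀ i, 0 ≤ lamb i := fun i =>
    ge_of_tendsto (hlbi i) (Eventually.of_forall fun r => hlam_nonneg _ i)
  have hlamb_compl : ∀ i, lamb i * g i xstar = 0 := by
    intro i
    have h1 : Tendsto (fun r => lam (θ r) i
        * barG g g' (x (θ r + 1)) (x (θ r)) (Lgs (θ r)) i) atTop
        (𝓝 (lamb i * g i xstar)) :=
      (hlbi i).mul (hbarGlim θ xstar hθtop hxθ i)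
    have h2 : ∀ r, lam (θ r) i * barG g g' (x (θ r + 1)) (x (θ r)) (Lgs (θ r)) i = 0 :=
      fun r => hcompl (θ r) i
    rw [funext h2] at h1
    exact tendsto_nhds_unique h1 tendsto_const_nhds
  have hub_mem : ub ∈ ConvexSubdiff P1 xstar :=
    subdiff_closed P1 hP1c (fun r => hu (θ r)) hxθ1 huθ
  have hvb_mem : vb ∈ ConvexSubdiff P2 xstar :=
    subdiff_closed P2 hP2c (fun r => hseq.subgrad (θ r)) hxθ hvθ
  -- FOC limit
  have hcoefbd : ∀ t, |Lfs t + ∑ i, lam t i * Lgs t i| ≤ M + m * max Mlam 0 * M := by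
    intro t
    have h1 : 0 ≤ Lfs t + ∑ i, lam t i * Lgs t i :=
      add_nonneg (le_trans hLlo.le (hseq.Lf_lb t))
        (Finset.sum_nonneg fun i _ => mul_nonneg (hlam_nonneg t i)
          (le_trans hLlo.le (hseq.Lg_lb t i)))
    rw [abs_of_nonneg h1]
    have h2 : ∑ i, lam t i * Lgs t i ≤ ∑ i : Fin m, max Mlam 0 * M :=
      Finset.sum_le_sum fun i _ =>
        mul_le_mul (le_max_of_le_left (hMlam t i)) ((hM t).2 i)
          (le_trans hLlo.le (hseq.Lg_lb t i)) (le_max_right _ _)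
    have h3 : (∑ _i : Fin m, max Mlam 0 * M) = m * max Mlam 0 * M := by
      rw [Finset.sum_const, Finset.card_univ, Fintype.card_fin, nsmul_eq_mul]; ring
    linarith [(hM t).1, h3 ▸ h2]
  have hT3 : Tendsto (fun r => (Lfs (θ r) + ∑ i, lam (θ r) i * Lgs (θ r) i)
      • (x (θ r + 1) - x (θ r))) atTop (𝓝 0) := by
    rw [tendsto_zero_iff_norm_tendsto_zero]
    refine squeeze_zero (fun r => norm_nonneg _) (fun r => ?_)
      (g := fun r => (M + m * max Mlam 0 * M) * ‖x (θ r + 1) - x (θ r)‖) ?_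
    · rw [norm_smul, Real.norm_eq_abs]
      exact mul_le_mul_of_nonneg_right (hcoefbd _) (norm_nonneg _)
    · have := (hΔn.comp hθtop).const_mul (M + m * max Mlam 0 * M)
      simpa using this
  have hfoclim : Tendsto (fun r => f' (x (θ r)) - ξ (θ r)
      + (Lfs (θ r) + ∑ i, lam (θ r) i * Lgs (θ r) i) • (x (θ r + 1) - x (θ r))
      + u (θ r) + ∑ i, lam (θ r) i • g' i (x (θ r))) atTop
      (𝓝 (f' xstar - vb + 0 + ub + ∑ i, lamb i • g' i xstar)) := by
    refine ((((((hf'c.tendsto xstar).comp hxθ).sub hvθ).add hT3).add huθ).add ?_)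
    exact tendsto_finset_sum _ fun i _ => (hlbi i).smul (((hg'c i).tendsto xstar).comp hxθ)
  have hfoc_eq : f' xstar - vb + 0 + ub + (∑ i, lamb i • g' i xstar) = 0 := by
    have h2 : ∀ r, f' (x (θ r)) - ξ (θ r)
        + (Lfs (θ r) + ∑ i, lam (θ r) i * Lgs (θ r) i) • (x (θ r + 1) - x (θ r))
        + u (θ r) + (∑ i, lam (θ r) i • g' i (x (θ r))) = 0 := fun r => hufoc (θ r)
    rw [funext h2] at hfoclim
    exact tendsto_nhds_unique hfoclim tendsto_const_nhds
  refine ⟨hfeas_star, lamb, hlamb_nonneg, hlamb_compl, ub, hub_mem, vb, hvb_mem, ?_⟩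
  have : f' xstar + ub - vb + (∑ i, lamb i • g' i xstar)
      = f' xstar - vb + 0 + ub + (∑ i, lamb i • g' i xstar) := by abel
  rw [this, hfoc_eq]
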